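/- Let (b_n) be a D-sequence. For every x ∈ (−1/2, 1/2], there exist integers d_n (n ≥ 1) with |d_n| ≤ b_n/(2 b_{n−1}) for all n ≥ 1, such that x = ∑_{n=1}^∞ d_n / b_n. -/

import Mathlib

def IsDSeq (b : ℕ → ℕ) : Prop :=
  b 0 = 1 ∧ (∀ n, b n ∣ b (n + 1)) ∧ ∀ n, b n ≠ b (n + 1)

theorem stmt_11 (b : ℕ → ℕ) (hb : IsDSeq b)
    (x : ℝ) (hx : x ∈ Set.Ioc (-(1 / 2) : ℝ) (1 / 2)) :
    ∃ d : ℕ → ℤ,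
      (∀ n : ℕ, 1 ≤ n → |(d n : ℝ)| ≤ (b n : ℝ) / (2 * b (n - 1))) ∧
      HasSum (fun n : ℕ => (d (n + 1) : ℝ) / b (n + 1)) x := by
  obtain ⟨hb0, hdvd, hne⟩ := hb
  obtain ⟨hx1, hx2⟩ := hx
  have hpos : ∀ n, 0 < b n := by
    intro n
    rcases Nat.eq_zero_or_pos (b n) with h | h
    · exfalso
      have h1 : b (n + 1) = 0 := by
        have := hdvd n; rw [h] at this; exact Nat.eq_zero_of_zero_dvd this
      exact hne n (by rw [h, h1])
    · exact h
  have hbR : ∀ n, (0:ℝ) < b n := fun n => by exact_mod_cast hpos n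
  -- the multiplier m n = b (n+1) / b n
  set m : ℕ → ℕ := fun n => b (n + 1) / b n with hm_def
  have hm : ∀ n, b (n + 1) = m n * b n := fun n =>
    (Nat.div_mul_cancel (hdvd n)).symm
  have hm2 : ∀ n, 2 ≤ m n := by
    intro n
    have h1 := hm n
    have h2 := hpos n
    have h3 := hpos (n + 1)
    have h4 := hne n
    rcases Nat.lt_or_ge (m n) 2 with h | h
    · interval_cases h' : (m n) <;> omega
    · exact h
  have hmR : ∀ n, (b (n + 1) : ℝ) = (m n : ℝ) * b n := by
    intro n; exact_mod_cast congrArg (Nat.cast : ℕ → ℝ) (hm n)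
  have hmpos : ∀ n, (0:ℝ) < (m n : ℝ) := by
    intro n; have := hm2 n; positivity
  have hdouble : ∀ n, 2 * b n ≤ b (n + 1) := by
    intro n
    have h1 := hm n
    have h2 := hm2 n
    nlinarith [hpos n]
  have hgrow : ∀ n, 2 ^ n ≤ b n := by
    intro n; induction n with
    | zero => simp [hb0]
    | succ n ih =>
      calc 2 ^ (n + 1) = 2 * 2 ^ n := by ring
        _ ≤ 2 * b n := by omega
        _ ≤ b (n + 1) := hdouble n
  have hgrowR : ∀ n, (2:ℝ) ^ n ≤ b n := by
    intro n; exact_mod_cast hgrow n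
  -- the nearest integer approximations
  set a : ℕ → ℤ := fun n => ⌈(b n : ℝ) * x - 1 / 2⌉ with ha_def
  have haub : ∀ n, (b n : ℝ) * x - a n ≤ 1 / 2 := by
    intro n
    have := Int.le_ceil ((b n : ℝ) * x - 1 / 2)
    simp only [ha_def]
    linarith
  have halb : ∀ n, -(1 / 2) < (b n : ℝ) * x - a n := by
    intro n
    have := Int.ceil_lt_add_one ((b n : ℝ) * x - 1 / 2)
    simp only [ha_def]
    linarith
  have ha0 : a 0 = 0 := by
    simp only [ha_def]
    have hb0R : (b 0 : ℝ) = 1 := by rw [hb0]; norm_num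
    rw [Int.ceil_eq_iff]
    rw [hb0R]
    push_cast
    constructor <;> linarith
  -- bound on the digits
  have hdig : ∀ k : ℕ, |((a (k + 1) - (m k : ℤ) * a k : ℤ) : ℝ)| ≤ (m k : ℝ) / 2 := by
    intro k
    set D : ℤ := a (k + 1) - (m k : ℤ) * a k with hD_def
    have hmRk := hmR k
    have hDR : (D : ℝ) = ((a (k + 1) : ℝ) - (b (k + 1) : ℝ) * x)
        + (m k : ℝ) * ((b k : ℝ) * x - a k) := by
      have h0 : (D : ℝ) = (a (k + 1) : ℝ) - (m k : ℝ) * (a k : ℝ) := by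
        rw [hD_def]; push_cast; ring
      rw [h0, hmRk]; ring
    have hub : (D : ℝ) < 1 / 2 + (m k : ℝ) / 2 := by
      have h1 : (a (k + 1) : ℝ) - (b (k + 1) : ℝ) * x < 1 / 2 := by
        have := halb (k + 1); linarith
      have h2 : (m k : ℝ) * ((b k : ℝ) * x - a k) ≤ (m k : ℝ) * (1 / 2) :=
        mul_le_mul_of_nonneg_left (haub k) (le_of_lt (hmpos k))
      rw [hDR]; linarith
    have hlb : -(1 / 2 + (m k : ℝ) / 2) < (D : ℝ) := by
      have h1 : -(1 / 2) ≤ (a (k + 1) : ℝ) - (b (k + 1) : ℝ) * x := by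
        have := haub (k + 1); linarith
      have h2 : (m k : ℝ) * (-(1 / 2)) < (m k : ℝ) * ((b k : ℝ) * x - a k) :=
        mul_lt_mul_of_pos_left (halb k) (hmpos k)
      rw [hDR]; nlinarith
    have habs : |(D : ℝ)| < ((m k : ℝ) + 1) / 2 := by
      rw [abs_lt]; constructor <;> linarith
    have habsZ : |2 * D| < (m k : ℤ) + 1 := by
      have h5 : |(2 * D : ℤ)| < ((m k : ℝ) + 1) := by
        push_cast
        rw [abs_mul]
        norm_num
        linarith [habs]
      exact_mod_cast h5
    have habsZ' : |2 * D| ≤ (m k : ℤ) := by omega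
    have h6 : |(2 * D : ℤ)| ≤ ((m k : ℤ) : ℝ) := by exact_mod_cast habsZ'
    push_cast at h6
    rw [abs_mul] at h6
    norm_num at h6
    linarith
  -- the digits
  refine ⟨fun n => Nat.casesOn n 0 (fun k => a (k + 1) - (m k : ℤ) * a k), ?_, ?_⟩
  · -- digit bound
    intro n hn
    obtain ⟨k, rfl⟩ : ∃ k, n = k + 1 := ⟨n - 1, by omega⟩
    simp only [Nat.add_sub_cancel]
    have hbk := hbR k
    rw [hmR k]
    rw [show (m k : ℝ) * (b k : ℝ) / (2 * (b k : ℝ)) = (m k : ℝ) / 2 by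
      field_simp]
    exact hdig k
  · -- HasSum
    show HasSum (fun k : ℕ => ((a (k + 1) - (m k : ℤ) * a k : ℤ) : ℝ) / (b (k + 1) : ℝ)) x
    have hterm : ∀ k : ℕ,
        ((a (k + 1) - (m k : ℤ) * a k : ℤ) : ℝ) / (b (k + 1) : ℝ)
          = (a (k + 1) : ℝ) / b (k + 1) - (a k : ℝ) / b k := by
      intro k
      have h1 := hmR k
      have h2 := hbR k
      have h3 := hbR (k + 1)
      have hm0 : (m k : ℝ) ≠ 0 := ne_of_gt (hmpos k)
      push_cast
      rw [h1]
      field_simp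
    have hS : ∀ n : ℕ, (∑ i ∈ Finset.range n,
        ((a (i + 1) - (m i : ℤ) * a i : ℤ) : ℝ) / (b (i + 1) : ℝ))
          = (a n : ℝ) / b n := by
      intro n
      induction n with
      | zero => simp [ha0]
      | succ n ih =>
        rw [Finset.sum_range_succ, ih, hterm n]
        ring
    -- bounds on the terms
    have hbound : ∀ k : ℕ,
        |((a (k + 1) - (m k : ℤ) * a k : ℤ) : ℝ) / (b (k + 1) : ℝ)| ≤ (1 / 2 : ℝ) ^ k := by
      intro k
      rw [abs_div, abs_of_pos (hbR (k + 1))]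
      calc |((a (k + 1) - (m k : ℤ) * a k : ℤ) : ℝ)| / (b (k + 1) : ℝ)
          ≤ ((m k : ℝ) / 2) / (b (k + 1) : ℝ) := by
            gcongr
            exact hdig k
        _ = 1 / (2 * (b k : ℝ)) := by
            rw [hmR k]
            have hm0 : (m k : ℝ) ≠ 0 := ne_of_gt (hmpos k)
            have hb0' : (b k : ℝ) ≠ 0 := ne_of_gt (hbR k)
            field_simp
        _ ≤ 1 / (2 ^ k : ℝ) := by
            gcongr
            have h7 := hgrowR k
            have h8 : (0:ℝ) < 2 ^ k := by positivity
            linarith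
        _ = (1 / 2 : ℝ) ^ k := by
            rw [one_div, one_div, inv_pow]
    -- summability
    have hsum : Summable (fun k : ℕ =>
        ((a (k + 1) - (m k : ℤ) * a k : ℤ) : ℝ) / (b (k + 1) : ℝ)) := by
      apply Summable.of_abs
      exact Summable.of_nonneg_of_le (fun k => abs_nonneg _) hbound summable_geometric_two
    -- convergence of partial sums
    have htend : Filter.Tendsto (fun n : ℕ => ∑ i ∈ Finset.range n,
        ((a (i + 1) - (m i : ℤ) * a i : ℤ) : ℝ) / (b (i + 1) : ℝ))
        Filter.atTop (nhds x) := by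
      have heq : (fun n : ℕ => ∑ i ∈ Finset.range n,
          ((a (i + 1) - (m i : ℤ) * a i : ℤ) : ℝ) / (b (i + 1) : ℝ))
          = fun n : ℕ => (a n : ℝ) / b n := funext hS
      rw [heq]
      rw [← tendsto_sub_nhds_zero_iff]
      have hle : ∀ n : ℕ, ‖(a n : ℝ) / b n - x‖ ≤ (1 / 2 : ℝ) ^ n := by
        intro n
        have h1 : |(b n : ℝ) * x - a n| ≤ 1 / 2 :=
          abs_le.mpr ⟨by linarith [halb n], haub n⟩
        have h2 : (a n : ℝ) / b n - x = -(((b n : ℝ) * x - a n) / b n) := by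
          field_simp [(hbR n).ne']
          ring
        rw [Real.norm_eq_abs, h2, abs_neg, abs_div, abs_of_pos (hbR n)]
        calc |(b n : ℝ) * x - a n| / (b n : ℝ) ≤ (1 / 2) / (2 ^ n : ℝ) := by
              apply div_le_div₀ (by norm_num) h1 (by positivity) (hgrowR n)
          _ ≤ 1 / (2 ^ n : ℝ) := by gcongr; norm_num
          _ = (1 / 2 : ℝ) ^ n := by rw [one_div, one_div, inv_pow]
      exact squeeze_zero_norm hle
        (tendsto_pow_atTop_nhds_zero_of_lt_one (by norm_num) (by norm_num))
    exact (Summable.hasSum_iff_tendsto_nat hsum).2 htend
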